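/- Let σ be a partition of the set of all primes and G a finite σ-soluble group. If M is a maximal subgroup of G, then the index |G:M| is σ-primary, i.e. all primes dividing |G:M| lie in a single member σ_i of σ. -/

import Mathlib

open Subgroup Pointwise

/-- `σ` is a partition of the set of all primes: every member of every block is prime,
and every prime lies in exactly one block. -/
def IsPrimePartition {ι : Type*} (σ : ι → Set ℕ) : Prop :=
  (∀ i, ∀ p ∈ σ i, Nat.Prime p) ∧ ∀ p : ℕ, Nat.Prime p → ∃! i, p ∈ σ i

/-- `σ(m)`: the set of indices `i` such that `σ i` contains a prime divisor of `m`. -/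
def sigmaClasses {ι : Type*} (σ : ι → Set ℕ) (m : ℕ) : Set ι :=
  {i | ∃ p ∈ σ i, Nat.Prime p ∧ p ∣ m}

/-- A group of order `m` is `σ`-primary iff `m = 1` or `|σ(m)| = 1`. -/
def IsSigmaPrimary {ι : Type*} (σ : ι → Set ℕ) (m : ℕ) : Prop :=
  m = 1 ∨ (sigmaClasses σ m).ncard = 1

/-- `m` is a `Π`-number: every prime divisor of `m` lies in some block belonging to `Π`. -/
def IsPiNumber {ι : Type*} (σ : ι → Set ℕ) (Pi : Set ι) (m : ℕ) : Prop :=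
  ∀ p : ℕ, Nat.Prime p → p ∣ m → ∃ i ∈ Pi, p ∈ σ i

/-- `H` is a Hall `Π`-subgroup of `G`: `|H|` is a `Π`-number and `|G : H|` is a `Π'`-number. -/
def IsHallPiSubgroup {ι : Type*} (σ : ι → Set ℕ) (Pi : Set ι) {G : Type*} [Group G]
    (H : Subgroup G) : Prop :=
  IsPiNumber σ Pi (Nat.card H) ∧ IsPiNumber σ Piᶜ H.index

/-- `A` is `σ`-subnormal in `G`. -/
def IsSigmaSubnormal {ι : Type*} (σ : ι → Set ℕ) {G : Type*} [Group G] (A : Subgroup G) : Prop :=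
  ∃ (t : ℕ) (c : Fin (t + 1) → Subgroup G), Monotone c ∧ c 0 = A ∧ c (Fin.last t) = ⊤ ∧
    ∀ i : Fin t, ((c i.castSucc).subgroupOf (c i.succ)).Normal ∨
      IsSigmaPrimary σ
        (Nat.card (↥(c i.succ) ⧸ ((c i.castSucc).subgroupOf (c i.succ)).normalCore))

/-- `M/N` is a chief factor of `G`. -/
def IsChiefFactor {G : Type*} [Group G] (N M : Subgroup G) : Prop :=
  N.Normal ∧ M.Normal ∧ N < M ∧
    ∀ K : Subgroup G, K.Normal → N ≤ K → K ≤ M → K = N ∨ K = M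

/-- `G` is `σ`-soluble: every chief factor of `G` is `σ`-primary. -/
def IsSigmaSoluble {ι : Type*} (σ : ι → Set ℕ) (G : Type*) [Group G] : Prop :=
  ∀ N M : Subgroup G, IsChiefFactor N M →
    IsSigmaPrimary σ (Nat.card (↥M ⧸ N.subgroupOf M))

/-- `A` is an `n`-maximal subgroup of `G`. -/
def IsNMaximal {G : Type*} [Group G] (n : ℕ) (A : Subgroup G) : Prop :=
  ∃ c : Fin (n + 1) → Subgroup G, Monotone c ∧ c 0 = A ∧ c (Fin.last n) = ⊤ ∧
    ∀ i : Fin n, IsCoatom ((c i.castSucc).subgroupOf (c i.succ))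

/-- `A` is subnormal in `G`. -/
def IsSubnormalSubgroup {G : Type*} [Group G] (A : Subgroup G) : Prop :=
  ∃ (t : ℕ) (c : Fin (t + 1) → Subgroup G), Monotone c ∧ c 0 = A ∧ c (Fin.last t) = ⊤ ∧
    ∀ i : Fin t, ((c i.castSucc).subgroupOf (c i.succ)).Normal

/-- `S` is a complete Hall `σ`-set of `G`. -/
def IsCompleteHallSigmaSet {ι : Type*} (σ : ι → Set ℕ) {G : Type*} [Group G]
    (S : Set (Subgroup G)) : Prop :=
  (∀ H ∈ S, H ≠ ⊥ → ∃ i ∈ sigmaClasses σ (Nat.card G), IsHallPiSubgroup σ {i} H) ∧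
  ∀ i ∈ sigmaClasses σ (Nat.card G), ∃! H, H ∈ S ∧ IsHallPiSubgroup σ {i} H

/-- `G` is `σ`-dispersive. -/
def IsSigmaDispersive {ι : Type*} (σ : ι → Set ℕ) (G : Type*) [Group G] : Prop :=
  ∃ (t : ℕ) (c : Fin (t + 1) → Subgroup G) (H : Fin t → Subgroup G),
    StrictMono c ∧ c 0 = ⊥ ∧ c (Fin.last t) = ⊤ ∧ (∀ i, (c i).Normal) ∧
    IsCompleteHallSigmaSet σ (Set.range H) ∧
    ∀ i : Fin t, (c i.castSucc : Set G) * (H i : Set G) = (c i.succ : Set G)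


lemma sigmaPrimary_of_dvd {ι : Type*} {σ : ι → Set ℕ} (hσ : IsPrimePartition σ)
    {m n : ℕ} (hm : m ≠ 0) (hdvd : m ∣ n) (hn : IsSigmaPrimary σ n) :
    IsSigmaPrimary σ m := by
  rcases eq_or_ne m 1 with rfl | hm1
  · exact Or.inl rfl
  right
  obtain ⟨p, hp, hpm⟩ := Nat.exists_prime_and_dvd hm1
  obtain ⟨i, hi, _⟩ := hσ.2 p hp
  have hmem : i ∈ sigmaClasses σ m := ⟨p, hi, hp, hpm⟩
  rcases hn with hn1 | hn
  · exact absurd (Nat.eq_one_of_dvd_one (hn1 ▸ hdvd)) hm1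
  obtain ⟨j, hj⟩ := Set.ncard_eq_one.mp hn
  have hsub : sigmaClasses σ m ⊆ sigmaClasses σ n := by
    rintro k ⟨q, hq, hqp, hqm⟩
    exact ⟨q, hq, hqp, hqm.trans hdvd⟩
  have : sigmaClasses σ m = {j} := by
    apply Set.eq_singleton_iff_nonempty_unique_mem.mpr
    refine ⟨⟨i, hmem⟩, fun k hk => ?_⟩
    have := hsub hk
    rw [hj] at this
    exact this
  rw [this]
  exact Set.ncard_singleton j

/-- If `M` is a maximal subgroup of a finite `σ`-soluble group `G`, then `|G : M|` is
`σ`-primary. -/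
theorem index_sigmaPrimary_of_maximal
    {ι : Type*} (σ : ι → Set ℕ) (hσ : IsPrimePartition σ)
    (G : Type*) [Group G] [Finite G] (hsol : IsSigmaSoluble σ G)
    (M : Subgroup G) (hM : IsCoatom M) :
    IsSigmaPrimary σ M.index := by
  classical
  set K := M.normalCore with hKdef
  have hKM : K ≤ M := M.normalCore_le
  have hKtop : K < ⊤ := lt_of_le_of_lt hKM (lt_top_iff_ne_top.mpr hM.1)
  obtain ⟨N, ⟨hNnorm, hKN⟩, hmin⟩ :=
    (by
      obtain ⟨a, ha, hm⟩ := Set.Finite.exists_minimalFor id {N : Subgroup G | N.Normal ∧ K < N}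
        (Set.toFinite _) ⟨⊤, ⟨inferInstance, hKtop⟩⟩
      exact ⟨a, ha, fun b hb hba => le_antisymm (hm hb hba) hba⟩ :
      ∃ a ∈ {N : Subgroup G | N.Normal ∧ K < N}, ∀ a' ∈ {N : Subgroup G | N.Normal ∧ K < N},
        id a' ≤ id a → id a = id a')
  have hchief : IsChiefFactor K N := by
    refine ⟨M.normalCore_normal, hNnorm, hKN, fun L hL hKL hLN => ?_⟩
    rcases eq_or_lt_of_le hKL with h | h
    · exact Or.inl h.symm
    · exact Or.inr ((hmin L ⟨hL, h⟩ hLN).symm)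
  have hprim : IsSigmaPrimary σ (K.relIndex N) := hsol K N hchief
  have hNM : ¬ N ≤ M := fun h => absurd (normal_le_normalCore.mpr h) (not_le_of_gt hKN)
  have hsup : M ⊔ N = ⊤ := hM.2 _ (lt_of_le_of_ne le_sup_left
    (fun h => hNM (le_trans le_sup_right h.symm.le)))
  have hNindex : N.relIndex M = N.index := by
    have := Subgroup.relIndex_sup_right M N
    rw [hsup, relIndex_top_right] at this
    exact this.symm
  have h1 : M.relIndex N * N.index = (M ⊓ N).index := by
    rw [← inf_relIndex_right]
    exact relIndex_mul_index inf_le_right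
  have h2 : N.index * M.index = (M ⊓ N).index := by
    rw [← hNindex, ← inf_relIndex_left]
    exact relIndex_mul_index inf_le_left
  have hN0 : N.index ≠ 0 := Subgroup.index_ne_zero_of_finite
  have heq : M.index = M.relIndex N := by
    have : M.relIndex N * N.index = M.index * N.index := by
      rw [h1, ← h2, mul_comm]
    exact (Nat.eq_of_mul_eq_mul_right (Nat.pos_of_ne_zero hN0) this).symm
  have hdvd : M.index ∣ K.relIndex N := heq ▸ relIndex_dvd_of_le_left N hKM
  exact sigmaPrimary_of_dvd hσ Subgroup.index_ne_zero_of_finite hdvd hprim
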